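/- Let Gᵢ ⊂ ℂ, i ∈ I, be Jordan domains, G = ∏ᵢ Gᵢ and closure(G) = ∏ᵢ closure(Gᵢ) with the product topology. If f : closure(G) → ℂ ∪ {∞} is a χ-uniform limit on closure(G) of polynomials, then either f ≡ ∞, or f is continuous on closure(G), f(G) ⊂ ℂ, and f is separately holomorphic on G. -/

import Mathlib

/-- The chordal distance on the Riemann sphere `ℂ ∪ {∞} = OnePoint ℂ`. -/
noncomputable def chordal (a b : OnePoint ℂ) : ℝ :=
  Option.rec
    (Option.rec 0 (fun y => 1 / Real.sqrt (1 + ‖y‖ ^ 2)) b)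
    (fun x => Option.rec (1 / Real.sqrt (1 + ‖x‖ ^ 2))
      (fun y => ‖x - y‖ /
        (Real.sqrt (1 + ‖x‖ ^ 2) * Real.sqrt (1 + ‖y‖ ^ 2))) b) a

/-- A Jordan domain: the bounded connected component of the complement of a Jordan curve
(a homeomorphic image of the unit circle) in `ℂ`. -/
def IsJordanDomain (G : Set ℂ) : Prop :=
  ∃ C : Set ℂ, Nonempty (↥(Metric.sphere (0:ℂ) 1) ≃ₜ ↥C) ∧
    Bornology.IsBounded G ∧ ∃ z ∈ Cᶜ, G = connectedComponentIn Cᶜ z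

open Complex OnePoint Set Filter Topology Metric

lemma chordal_coe_coe (x y : ℂ) : chordal (x : OnePoint ℂ) (y : OnePoint ℂ) =
    ‖x - y‖ / (Real.sqrt (1 + ‖x‖ ^ 2) * Real.sqrt (1 + ‖y‖ ^ 2)) := rfl

lemma chordal_coe_infty (x : ℂ) : chordal (x : OnePoint ℂ) ∞ = 1 / Real.sqrt (1 + ‖x‖ ^ 2) := rfl

lemma chordal_infty_coe (y : ℂ) : chordal ∞ (y : OnePoint ℂ) = 1 / Real.sqrt (1 + ‖y‖ ^ 2) := rfl

lemma chordal_infty_infty : chordal (∞ : OnePoint ℂ) ∞ = 0 := rfl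

noncomputable def sph (a : OnePoint ℂ) : EuclideanSpace ℝ (Fin 3) :=
  Option.rec (WithLp.toLp 2 ![(0:ℝ), 0, 1])
    (fun z => WithLp.toLp 2 ![z.re / (1 + Complex.normSq z), z.im / (1 + Complex.normSq z),
      Complex.normSq z / (1 + Complex.normSq z)]) a

lemma dist_sph (a b : OnePoint ℂ) :
    dist (sph a) (sph b) = Real.sqrt ((sph a 0 - sph b 0) ^ 2 + ((sph a 1 - sph b 1) ^ 2 + ((sph a 2 - sph b 2) ^ 2 + 0))) := by
  rw [EuclideanSpace.dist_eq]
  congr 1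
  rw [Fin.sum_univ_succ, Fin.sum_univ_succ, Fin.sum_univ_succ, Fin.sum_univ_zero]
  simp [Real.dist_eq, sq_abs]

lemma normSq_pos' (z : ℂ) : (0:ℝ) < 1 + Complex.normSq z := by
  have := Complex.normSq_nonneg z; linarith

lemma sph_coe (z : ℂ) : sph (z : OnePoint ℂ) =
    ![z.re / (1 + Complex.normSq z), z.im / (1 + Complex.normSq z),
      Complex.normSq z / (1 + Complex.normSq z)] := rfl

lemma sph_infty : sph (∞ : OnePoint ℂ) = ![(0:ℝ), 0, 1] := rfl

lemma sqrt_one_add_abs_sq (z : ℂ) : Real.sqrt (1 + ‖z‖ ^ 2) = Real.sqrt (1 + Complex.normSq z) := by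
  rw [Complex.sq_norm]

lemma aux1 (u v : ℝ) : (0 - u / (1+(u^2+v^2)))^2 + ((0 - v/(1+(u^2+v^2)))^2 + ((1 - (u^2+v^2)/(1+(u^2+v^2)))^2 + 0)) = (1+(u^2+v^2))⁻¹ := by
  have h : (1+(u^2+v^2) : ℝ) ≠ 0 := by positivity
  field_simp
  ring

lemma aux2 (a b c e : ℝ) :
    ((a-c)^2+(b-e)^2) / ((1+(a^2+b^2))*(1+(c^2+e^2))) =
    (a/(1+(a^2+b^2)) - c/(1+(c^2+e^2)))^2 + ((b/(1+(a^2+b^2)) - e/(1+(c^2+e^2)))^2 +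
      (((a^2+b^2)/(1+(a^2+b^2)) - (c^2+e^2)/(1+(c^2+e^2)))^2 + 0)) := by
  have h1 : (1+(a^2+b^2) : ℝ) ≠ 0 := by positivity
  have h2 : (1+(c^2+e^2) : ℝ) ≠ 0 := by positivity
  field_simp
  ring

lemma normSq_eq' (z : ℂ) : Complex.normSq z = z.re^2 + z.im^2 := by
  rw [Complex.normSq_apply]; ring

lemma normSq_sub' (x y : ℂ) : Complex.normSq (x - y) = (x.re - y.re)^2 + (x.im - y.im)^2 := by
  rw [Complex.normSq_apply, Complex.sub_re, Complex.sub_im]; ring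

lemma chordal_eq_dist (a b : OnePoint ℂ) : chordal a b = dist (sph a) (sph b) := by
  induction a using OnePoint.rec with
  | infty =>
    induction b using OnePoint.rec with
    | infty => simp [chordal_infty_infty]
    | coe y =>
      rw [chordal_infty_coe, dist_sph, sqrt_one_add_abs_sq, one_div, ← Real.sqrt_inv]
      congr 1
      simp only [sph_coe, sph_infty, Matrix.cons_val_zero, Matrix.cons_val_one, Matrix.head_cons,
        Matrix.cons_val_two, Matrix.tail_cons]
      rw [normSq_eq']
      exact (aux1 y.re y.im).symm
  | coe x =>
    induction b using OnePoint.rec with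
    | infty =>
      rw [chordal_coe_infty, dist_sph, sqrt_one_add_abs_sq, one_div, ← Real.sqrt_inv]
      congr 1
      simp only [sph_coe, sph_infty, Matrix.cons_val_zero, Matrix.cons_val_one, Matrix.head_cons,
        Matrix.cons_val_two, Matrix.tail_cons]
      rw [normSq_eq']
      have := aux1 x.re x.im
      have h2 : ∀ u w : ℝ, (0 - u)^2 = (u - 0)^2 := by intro u w; ring
      nlinarith [aux1 x.re x.im]
    | coe y =>
      rw [chordal_coe_coe, dist_sph, sqrt_one_add_abs_sq, sqrt_one_add_abs_sq]
      rw [Complex.norm_def, ← Real.sqrt_mul (le_of_lt (normSq_pos' x)),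
        ← Real.sqrt_div (Complex.normSq_nonneg _)]
      congr 1
      simp only [sph_coe, Matrix.cons_val_zero, Matrix.cons_val_one, Matrix.head_cons,
        Matrix.cons_val_two, Matrix.tail_cons]
      rw [normSq_sub', normSq_eq' x, normSq_eq' y]
      exact aux2 x.re x.im y.re y.im

lemma chordal_nonneg (a b : OnePoint ℂ) : 0 ≤ chordal a b := by
  rw [chordal_eq_dist]; exact dist_nonneg

lemma chordal_comm (a b : OnePoint ℂ) : chordal a b = chordal b a := by
  rw [chordal_eq_dist, chordal_eq_dist, dist_comm]

lemma chordal_triangle (a b c : OnePoint ℂ) : chordal a c ≤ chordal a b + chordal b c := by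
  rw [chordal_eq_dist, chordal_eq_dist, chordal_eq_dist]; exact dist_triangle _ _ _

lemma one_le_sqrt' (x : ℂ) : 1 ≤ Real.sqrt (1 + ‖x‖ ^ 2) := by
  have h : (1:ℝ) ≤ 1 + ‖x‖ ^ 2 := by nlinarith [norm_nonneg x]
  calc (1:ℝ) = Real.sqrt 1 := by simp
  _ ≤ _ := Real.sqrt_le_sqrt h

lemma sqrt_pos' (x : ℂ) : 0 < Real.sqrt (1 + ‖x‖ ^ 2) :=
  lt_of_lt_of_le one_pos (one_le_sqrt' x)

lemma chordal_le_abs (x y : ℂ) : chordal ↑x ↑y ≤ ‖x - y‖ := by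
  rw [chordal_coe_coe]
  apply div_le_self (norm_nonneg _)
  calc (1:ℝ) = 1 * 1 := by ring
  _ ≤ _ := mul_le_mul (one_le_sqrt' x) (one_le_sqrt' y) one_pos.le
      (le_trans one_pos.le (one_le_sqrt' x))

lemma chordal_infty_pos (x : ℂ) : 0 < chordal ↑x ∞ := by
  rw [chordal_coe_infty]
  exact div_pos one_pos (sqrt_pos' x)

lemma lem_sqrtle {y : ℂ} {c : ℝ} (hc : 0 < c) (h : c ≤ chordal ↑y ∞) :
    Real.sqrt (1 + ‖y‖ ^ 2) ≤ 1 / c := by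
  rw [chordal_coe_infty] at h
  rw [le_div_iff₀ hc]
  have hs := sqrt_pos' y
  calc Real.sqrt (1 + ‖y‖ ^ 2) * c
      ≤ Real.sqrt (1 + ‖y‖ ^ 2) * (1 / Real.sqrt (1 + ‖y‖ ^ 2)) :=
        mul_le_mul_of_nonneg_left h hs.le
  _ = 1 := by field_simp

lemma lem_big {y : ℂ} {R δ : ℝ} (hδ : 0 < δ) (hR : 0 ≤ R)
    (hle : Real.sqrt (1 + R ^ 2) ≤ 1 / δ) (h : chordal ↑y ∞ < δ) : R < ‖y‖ := by
  rw [chordal_coe_infty] at h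
  have hs := sqrt_pos' y
  have h1 : 1 / δ < Real.sqrt (1 + ‖y‖ ^ 2) := by
    rw [div_lt_iff₀ hδ]
    rw [div_lt_iff₀ hs] at h
    linarith [mul_comm δ (Real.sqrt (1 + ‖y‖ ^ 2))]
  have h2 : Real.sqrt (1 + R ^ 2) < Real.sqrt (1 + ‖y‖ ^ 2) := lt_of_le_of_lt hle h1
  have h3 : 1 + R ^ 2 < 1 + ‖y‖ ^ 2 := by
    by_contra hcon
    push_neg at hcon
    exact absurd (Real.sqrt_le_sqrt hcon) (not_le.2 h2)
  have h4 : R ^ 2 < ‖y‖ ^ 2 := by linarith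
  by_contra hcon
  push_neg at hcon
  nlinarith [norm_nonneg y]

lemma abs_sub_eq_chordal (y a : ℂ) : ‖y - a‖ =
    chordal ↑y ↑a * (Real.sqrt (1 + ‖y‖ ^ 2) * Real.sqrt (1 + ‖a‖ ^ 2)) := by
  rw [chordal_coe_coe, div_mul_cancel₀]
  positivity

lemma key_est {y a : ℂ} {M ε' : ℝ} (hM : ‖a‖ ≤ M) (h1 : chordal ↑y ↑a < ε')
    (h2 : ε' ≤ 1 / (2 * Real.sqrt (1 + M ^ 2))) :
    ‖y - a‖ ≤ 2 * ε' * (1 + M ^ 2) := by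
  have hM0 : 0 ≤ M := le_trans (norm_nonneg _) hM
  have hsM : 0 < Real.sqrt (1 + M ^ 2) := by positivity
  have hsa : Real.sqrt (1 + ‖a‖ ^ 2) ≤ Real.sqrt (1 + M ^ 2) := by
    apply Real.sqrt_le_sqrt
    nlinarith [norm_nonneg a]
  have hainv : 1 / Real.sqrt (1 + M ^ 2) ≤ chordal ↑a ∞ := by
    rw [chordal_coe_infty]
    apply div_le_div_of_nonneg_left one_pos.le (sqrt_pos' a) hsa
  have htri : chordal ↑a ∞ ≤ chordal ↑a ↑y + chordal ↑y ∞ := chordal_triangle _ _ _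
  have hyinf : 1 / (2 * Real.sqrt (1 + M ^ 2)) ≤ chordal ↑y ∞ := by
    rw [chordal_comm] at h1
    have : 1 / Real.sqrt (1 + M ^ 2) - ε' ≤ chordal ↑y ∞ := by linarith
    have hh : 1 / Real.sqrt (1 + M ^ 2) - 1 / (2 * Real.sqrt (1 + M ^ 2)) =
        1 / (2 * Real.sqrt (1 + M ^ 2)) := by
      field_simp
      ring
    linarith
  have hy2 : Real.sqrt (1 + ‖y‖ ^ 2) ≤ 2 * Real.sqrt (1 + M ^ 2) := by
    have := lem_sqrtle (by positivity) hyinf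
    rwa [one_div_one_div] at this
  rw [abs_sub_eq_chordal]
  have hch : 0 ≤ chordal ↑y ↑a := chordal_nonneg _ _
  calc chordal ↑y ↑a * (Real.sqrt (1 + ‖y‖ ^ 2) * Real.sqrt (1 + ‖a‖ ^ 2))
      ≤ ε' * (2 * Real.sqrt (1 + M ^ 2) * Real.sqrt (1 + M ^ 2)) := by
        apply mul_le_mul h1.le _ (by positivity) (le_trans hch h1.le)
        exact mul_le_mul hy2 hsa (by positivity) (by positivity)
  _ = 2 * ε' * (Real.sqrt (1 + M ^ 2) * Real.sqrt (1 + M ^ 2)) := by ring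
  _ = 2 * ε' * (1 + M ^ 2) := by
        rw [Real.mul_self_sqrt (by positivity : (0:ℝ) ≤ 1 + M ^ 2)]

lemma eq_of_sq {a b : ℝ} (ha : 0 ≤ a) (hb : 0 ≤ b) (h : a ^ 2 = b ^ 2) : a = b := by nlinarith

lemma chordal_coe_coe_sq (x y : ℂ) : (chordal ↑x ↑y) ^ 2 =
    Complex.normSq (x - y) / ((1 + Complex.normSq x) * (1 + Complex.normSq y)) := by
  rw [chordal_coe_coe, div_pow, mul_pow, Real.sq_sqrt (by positivity), Real.sq_sqrt (by positivity),
    Complex.sq_norm, Complex.sq_norm, Complex.sq_norm]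

lemma chordal_coe_infty_sq (x : ℂ) : (chordal ↑x ∞) ^ 2 = 1 / (1 + Complex.normSq x) := by
  rw [chordal_coe_infty, div_pow, Real.sq_sqrt (by positivity), Complex.sq_norm, one_pow]

lemma chordal_inv_coe {y c : ℂ} (hy : y ≠ 0) (hc : c ≠ 0) :
    chordal ↑y⁻¹ ↑c⁻¹ = chordal ↑y ↑c := by
  apply eq_of_sq (chordal_nonneg _ _) (chordal_nonneg _ _)
  rw [chordal_coe_coe_sq, chordal_coe_coe_sq]
  have h : y⁻¹ - c⁻¹ = (c - y) / (y * c) := by field_simp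
  have hy' : Complex.normSq y ≠ 0 := by simpa [Complex.normSq_eq_zero] using hy
  have hc' : Complex.normSq c ≠ 0 := by simpa [Complex.normSq_eq_zero] using hc
  have hy1 : (1 : ℝ) + Complex.normSq y ≠ 0 := ne_of_gt (normSq_pos' y)
  have hc1 : (1 : ℝ) + Complex.normSq c ≠ 0 := ne_of_gt (normSq_pos' c)
  rw [h, map_div₀ Complex.normSq, map_mul Complex.normSq, map_inv₀ Complex.normSq,
    map_inv₀ Complex.normSq, show c - y = -(y - c) by ring, Complex.normSq_neg]
  have hq : (1 + Complex.normSq y + Complex.normSq y * Complex.normSq c + Complex.normSq c : ℝ) ≠ 0 := by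
    nlinarith [Complex.normSq_nonneg y, Complex.normSq_nonneg c]
  field_simp [hq]
  linear_combination Complex.normSq (y - c) * mul_inv_cancel₀ hq

lemma chordal_inv_zero {y : ℂ} (hy : y ≠ 0) : chordal ↑y⁻¹ ↑(0 : ℂ) = chordal ↑y ∞ := by
  apply eq_of_sq (chordal_nonneg _ _) (chordal_nonneg _ _)
  rw [chordal_coe_coe_sq, chordal_coe_infty_sq, sub_zero, map_inv₀ Complex.normSq,
    Complex.normSq_zero]
  have hy' : Complex.normSq y ≠ 0 := by simpa [Complex.normSq_eq_zero] using hy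
  have hy1 : (1 : ℝ) + Complex.normSq y ≠ 0 := ne_of_gt (normSq_pos' y)
  field_simp
  rw [add_comm (Complex.normSq y) 1, div_self hy1]
  norm_num

lemma tendsto_of_chordal {α : Type*} {l : Filter α} {F : α → OnePoint ℂ} {b : OnePoint ℂ}
    (h : ∀ ε > 0, ∀ᶠ x in l, chordal (F x) b < ε) : Tendsto F l (𝓝 b) := by
  induction b using OnePoint.rec with
  | infty =>
    rw [OnePoint.hasBasis_nhds_infty.tendsto_right_iff]
    rintro s ⟨hscl, hsc⟩
    obtain ⟨R, hR0, hsR⟩ : ∃ R, 0 ≤ R ∧ s ⊆ Metric.closedBall 0 R := by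
      obtain ⟨R, hsR⟩ := hsc.isBounded.subset_closedBall 0
      exact ⟨max R 0, le_max_right _ _,
        hsR.trans (Metric.closedBall_subset_closedBall (le_max_left _ _))⟩
    have hδ : (0:ℝ) < 1 / Real.sqrt (1 + R ^ 2) := by positivity
    filter_upwards [h _ hδ] with x hx
    cases hFx : F x with
    | infty => exact Or.inr rfl
    | coe y =>
      left
      refine ⟨y, fun hy => ?_, rfl⟩
      rw [hFx] at hx
      have hby : R < ‖y‖ := by
        apply lem_big hδ hR0 _ hx
        rw [one_div_one_div]
      have := hsR hy
      rw [Metric.mem_closedBall, Complex.dist_eq, sub_zero] at this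
      exact absurd this (not_le.2 hby)
  | coe a =>
    rw [OnePoint.nhds_coe_eq]
    refine ((Metric.nhds_basis_ball.map ((↑) : ℂ → OnePoint ℂ)).tendsto_right_iff).2 ?_
    intro ε hε
    have hM : (0:ℝ) < 1 + ‖a‖ ^ 2 := by positivity
    have hsM : (0:ℝ) < Real.sqrt (1 + ‖a‖ ^ 2) := by positivity
    set δ := min (1 / (2 * Real.sqrt (1 + ‖a‖ ^ 2))) (ε / (4 * (1 + ‖a‖ ^ 2))) with hδdef
    have hδ : 0 < δ := lt_min (by positivity) (by positivity)
    filter_upwards [h δ hδ] with x hx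
    cases hFx : F x with
    | infty =>
      exfalso
      rw [hFx] at hx
      rw [chordal_comm, chordal_coe_infty] at hx
      have h1 : δ ≤ 1 / (2 * Real.sqrt (1 + ‖a‖ ^ 2)) := min_le_left _ _
      have h2 : 1 / (2 * Real.sqrt (1 + ‖a‖ ^ 2)) <
          1 / Real.sqrt (1 + ‖a‖ ^ 2) := by
        apply div_lt_div_of_pos_left one_pos hsM
        linarith
      linarith
    | coe y =>
      refine ⟨y, ?_, rfl⟩
      rw [hFx] at hx
      have hest : ‖y - a‖ ≤ 2 * δ * (1 + ‖a‖ ^ 2) :=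
        key_est le_rfl hx (min_le_left _ _)
      have h3 : 2 * δ * (1 + ‖a‖ ^ 2) ≤ ε / 2 := by
        have : δ ≤ ε / (4 * (1 + ‖a‖ ^ 2)) := min_le_right _ _
        rw [le_div_iff₀ (by positivity : (0:ℝ) < 4 * (1 + ‖a‖ ^ 2))] at this
        nlinarith
      rw [Metric.mem_ball, Complex.dist_eq]
      linarith

noncomputable def toC (o : OnePoint ℂ) : ℂ := Option.rec 0 (fun c => c) o

lemma toC_coe (c : ℂ) : toC (c : OnePoint ℂ) = c := rfl

lemma coe_toC {o : OnePoint ℂ} (h : o ≠ ∞) : ((toC o : ℂ) : OnePoint ℂ) = o := by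
  cases o with
  | infty => exact absurd rfl h
  | coe y => rfl

lemma tendsto_toC {α : Type*} {l : Filter α} {F : α → OnePoint ℂ} {a : ℂ}
    (h : Tendsto F l (𝓝 (↑a : OnePoint ℂ))) : Tendsto (fun x => toC (F x)) l (𝓝 a) := by
  rw [OnePoint.nhds_coe_eq] at h
  have h2 : Tendsto toC (Filter.map ((↑) : ℂ → OnePoint ℂ) (𝓝 a)) (𝓝 a) := by
    rw [Filter.tendsto_map'_iff]
    exact tendsto_id
  exact h2.comp h

lemma differentiable_slice {I : Type*} [DecidableEq I] (z : I → ℂ) (i : I) (p : MvPolynomial I ℂ) :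
    Differentiable ℂ (fun w => MvPolynomial.eval (Function.update z i w) p) := by
  induction p using MvPolynomial.induction_on with
  | C a => simpa using differentiable_const a
  | add p q hp hq =>
    simp only [map_add]
    exact hp.add hq
  | mul_X p j hp =>
    simp only [map_mul, MvPolynomial.eval_X]
    apply hp.mul
    by_cases hj : j = i
    · subst hj
      simp only [Function.update_self]
      exact differentiable_id
    · simp only [Function.update_of_ne hj]
      exact differentiable_const _

section Main

variable {I : Type*} [DecidableEq I] {G : I → Set ℂ} {P : ℕ → MvPolynomial I ℂ}
  {f : (I → ℂ) → OnePoint ℂ}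

/-- Quantitative chordal equicontinuity of the limit. -/
lemma qc_of_hconv
    (hconv : ∀ ε > 0, ∃ K : ℕ, ∀ k ≥ K,
      ∀ z ∈ Set.pi Set.univ fun i => closure (G i),
        chordal ((MvPolynomial.eval z (P k) : ℂ) : OnePoint ℂ) (f z) < ε) :
    ∀ z₀ ∈ (Set.pi Set.univ fun i => closure (G i)), ∀ ε > 0, ∃ U ∈ 𝓝 z₀,
      ∀ z ∈ U ∩ (Set.pi Set.univ fun i => closure (G i)), chordal (f z) (f z₀) < ε := by
  intro z₀ hz₀ ε hε
  obtain ⟨N, hN⟩ := hconv (ε / 3) (by linarith)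
  set q : (I → ℂ) → ℂ := fun z => MvPolynomial.eval z (P N) with hq
  have hqc : Continuous q := MvPolynomial.continuous_eval _
  refine ⟨q ⁻¹' Metric.ball (q z₀) (ε / 3), hqc.continuousAt.preimage_mem_nhds
    (Metric.ball_mem_nhds _ (by linarith)), ?_⟩
  rintro z ⟨hzU, hzK⟩
  have h1 : chordal (f z) ↑(q z) < ε / 3 := by
    rw [chordal_comm]; exact hN N le_rfl z hzK
  have h2 : chordal ↑(q z) ↑(q z₀) < ε / 3 := by
    apply lt_of_le_of_lt (chordal_le_abs _ _)
    rw [← Complex.dist_eq]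
    exact hzU
  have h3 : chordal ↑(q z₀) (f z₀) < ε / 3 := hN N le_rfl z₀ hz₀
  calc chordal (f z) (f z₀) ≤ chordal (f z) ↑(q z) + chordal ↑(q z) (f z₀) := chordal_triangle _ _ _
  _ ≤ chordal (f z) ↑(q z) + (chordal ↑(q z) ↑(q z₀) + chordal ↑(q z₀) (f z₀)) := by
      linarith [chordal_triangle (↑(q z) : OnePoint ℂ) ↑(q z₀) (f z₀)]
  _ < ε := by linarith

lemma contOn_of_qc
    (hqc : ∀ z₀ ∈ (Set.pi Set.univ fun i => closure (G i)), ∀ ε > 0, ∃ U ∈ 𝓝 z₀,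
      ∀ z ∈ U ∩ (Set.pi Set.univ fun i => closure (G i)), chordal (f z) (f z₀) < ε) :
    ContinuousOn f (Set.pi Set.univ fun i => closure (G i)) := by
  intro z₀ hz₀
  apply tendsto_of_chordal
  intro ε hε
  obtain ⟨U, hU, h⟩ := hqc z₀ hz₀ ε hε
  filter_upwards [Filter.inter_mem (mem_nhdsWithin_of_mem_nhds hU) self_mem_nhdsWithin]
    with z hz using h z hz

lemma continuous_slice (z : I → ℂ) (i : I) : Continuous (fun w : ℂ => Function.update z i w) := by
  apply continuous_pi
  intro j
  by_cases hj : j = i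
  · subst hj
    simp only [Function.update_self]
    exact continuous_id
  · simp only [Function.update_of_ne hj]
    exact continuous_const

lemma sliceK {z : I → ℂ} (hz : z ∈ Set.pi Set.univ G) {i : I} {w : ℂ} (hw : w ∈ closure (G i)) :
    Function.update z i w ∈ Set.pi Set.univ fun j => closure (G j) := by
  intro j _
  by_cases hj : j = i
  · subst hj; simpa only [Function.update_self]
  · rw [Function.update_of_ne hj]; exact subset_closure (hz j trivial)

lemma sliceG {z : I → ℂ} (hz : z ∈ Set.pi Set.univ G) {i : I} {w : ℂ} (hw : w ∈ G i) :
    Function.update z i w ∈ Set.pi Set.univ G := by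
  intro j _
  by_cases hj : j = i
  · subst hj; simpa only [Function.update_self]
  · rw [Function.update_of_ne hj]; exact hz j trivial

end Main

lemma toC_infty : toC (∞ : OnePoint ℂ) = 0 := rfl

lemma sqrt_two_le_two : Real.sqrt (1 + 1 ^ 2) ≤ 2 := by
  nlinarith [Real.sq_sqrt (show (0:ℝ) ≤ 1 + 1^2 by norm_num),
    Real.sqrt_nonneg (1 + (1:ℝ)^2)]

lemma quarter_le_inv : (1:ℝ) / 4 ≤ 1 / (2 * Real.sqrt (1 + 1 ^ 2)) := by
  have h1 : (0:ℝ) < 2 * Real.sqrt (1 + 1 ^ 2) := by positivity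
  rw [div_le_div_iff₀ (by norm_num) h1]
  nlinarith [sqrt_two_le_two, Real.sqrt_nonneg (1 + (1:ℝ)^2)]

section Main2

variable {I : Type*} [DecidableEq I] {G : I → Set ℂ} {P : ℕ → MvPolynomial I ℂ}
  {f : (I → ℂ) → OnePoint ℂ}

lemma slice_open_infty
    (hconv : ∀ ε > 0, ∃ K : ℕ, ∀ k ≥ K,
      ∀ z ∈ Set.pi Set.univ fun i => closure (G i),
        chordal ((MvPolynomial.eval z (P k) : ℂ) : OnePoint ℂ) (f z) < ε)
    (hqc : ∀ z₀ ∈ (Set.pi Set.univ fun i => closure (G i)), ∀ ε > 0, ∃ U ∈ 𝓝 z₀,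
      ∀ z ∈ U ∩ (Set.pi Set.univ fun i => closure (G i)), chordal (f z) (f z₀) < ε)
    (z : I → ℂ) (hz : z ∈ Set.pi Set.univ G) (i : I) (hGoi : IsOpen (G i))
    (w₀ : ℂ) (hw₀ : w₀ ∈ G i) (hf₀ : f (Function.update z i w₀) = ∞) :
    ∀ᶠ w in 𝓝 w₀, f (Function.update z i w) = ∞ := by
  set sl : ℂ → (I → ℂ) := fun w => Function.update z i w with hsl
  have hslc : Continuous sl := continuous_slice z i
  obtain ⟨U, hU, hUq⟩ := hqc (sl w₀) (sliceK hz (subset_closure hw₀)) (1/4) (by norm_num)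
  have hnb : sl ⁻¹' U ∩ G i ∈ 𝓝 w₀ :=
    Filter.inter_mem (hslc.continuousAt.preimage_mem_nhds hU) (hGoi.mem_nhds hw₀)
  obtain ⟨r, hr, hball⟩ := Metric.nhds_basis_closedBall.mem_iff.1 hnb
  have hBsubG : Metric.closedBall w₀ r ⊆ G i := fun w hw => (hball hw).2
  have hBK : ∀ w ∈ Metric.closedBall w₀ r, sl w ∈ (Set.pi Set.univ fun j => closure (G j)) :=
    fun w hw => sliceK hz (subset_closure (hBsubG hw))
  have hB14 : ∀ w ∈ Metric.closedBall w₀ r, chordal (f (sl w)) ∞ < 1/4 := by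
    intro w hw
    have := hUq (sl w) ⟨(hball hw).1, hBK w hw⟩
    rwa [hf₀] at this
  have hbig : ∀ w ∈ Metric.closedBall w₀ r, ∀ c : ℂ, f (sl w) = ↑c → 1 < ‖c‖ := by
    intro w hw c hc
    have h := hB14 w hw
    rw [hc] at h
    apply lem_big (by norm_num : (0:ℝ) < 1/4) zero_le_one _ h
    calc Real.sqrt (1 + 1^2) ≤ 2 := sqrt_two_le_two
    _ ≤ 1 / (1/4) := by norm_num
  set ψ : ℂ → ℂ := fun w => (toC (f (sl w)))⁻¹ with hψdef
  set q : ℕ → ℂ → ℂ := fun k w => MvPolynomial.eval (sl w) (P k) with hqdef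
  have hpack : ∀ δ > 0, ∃ N : ℕ, ∀ k ≥ N, ∀ w ∈ Metric.closedBall w₀ r,
      q k w ≠ 0 ∧ ‖(q k w)⁻¹ - ψ w‖ ≤ δ := by
    intro δ hδ
    set ε := min (δ/5) (1/4) with hεdef
    have hε0 : 0 < ε := lt_min (by linarith) (by norm_num)
    have hε14 : ε ≤ 1/4 := min_le_right _ _
    have hεδ : ε ≤ δ/5 := min_le_left _ _
    have hεsqrt : ε ≤ 1 / (2 * Real.sqrt (1 + 1^2)) := le_trans hε14 quarter_le_inv
    obtain ⟨N, hN⟩ := hconv ε hε0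
    refine ⟨N, fun k hk w hw => ?_⟩
    have hqf : chordal ↑(q k w) (f (sl w)) < ε := hN k hk (sl w) (hBK w hw)
    have hqinf : chordal ↑(q k w) ∞ < 1/2 := by
      calc chordal ↑(q k w) ∞ ≤ chordal ↑(q k w) (f (sl w)) + chordal (f (sl w)) ∞ :=
        chordal_triangle _ _ _
      _ < ε + 1/4 := by linarith [hB14 w hw]
      _ ≤ 1/2 := by linarith
    have hq1 : 1 < ‖q k w‖ := by
      apply lem_big (by norm_num : (0:ℝ) < 1/2) zero_le_one _ hqinf
      calc Real.sqrt (1 + 1^2) ≤ 2 := sqrt_two_le_two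
      _ ≤ 1 / (1/2) := by norm_num
    have hqne : q k w ≠ 0 := by
      intro h
      rw [h] at hq1
      rw [norm_zero] at hq1
      exact absurd hq1 (by norm_num)
    refine ⟨hqne, ?_⟩
    cases hfsl : f (sl w) with
    | infty =>
      have hψ0 : ψ w = 0 := by rw [hψdef]; simp only [hfsl, toC_infty, inv_zero]
      rw [hfsl] at hqf
      have hch : chordal ↑(q k w)⁻¹ ↑(0:ℂ) < ε := by
        rw [chordal_inv_zero hqne]; exact hqf
      have hest := key_est (M := 1) (by simp : ‖(0:ℂ)‖ ≤ 1) hch hεsqrt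
      rw [hψ0]
      calc ‖(q k w)⁻¹ - 0‖ ≤ 2 * ε * (1 + 1^2) := hest
      _ ≤ 2 * (δ/5) * 2 := by nlinarith
      _ ≤ δ := by linarith
    | coe c =>
      have hc1 : 1 < ‖c‖ := hbig w hw c hfsl
      have hcne : c ≠ 0 := by
        intro h
        rw [h] at hc1
        rw [norm_zero] at hc1
        exact absurd hc1 (by norm_num)
      have hψc : ψ w = c⁻¹ := by rw [hψdef]; simp only [hfsl, toC_coe]
      rw [hfsl] at hqf
      have hch : chordal ↑(q k w)⁻¹ ↑c⁻¹ < ε := by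
        rw [chordal_inv_coe hqne hcne]; exact hqf
      have hMc : ‖c⁻¹‖ ≤ 1 := by
        rw [norm_inv]
        exact inv_le_one_of_one_le₀ hc1.le
      have hest := key_est hMc hch hεsqrt
      rw [hψc]
      calc ‖(q k w)⁻¹ - c⁻¹‖ ≤ 2 * ε * (1 + 1^2) := hest
      _ ≤ 2 * (δ/5) * 2 := by nlinarith
      _ ≤ δ := by linarith
  have hψdiff : DifferentiableOn ℂ ψ (Metric.ball w₀ r) := by
    have hunif : TendstoUniformlyOn (fun k w => (q k w)⁻¹) ψ atTop (Metric.closedBall w₀ r) := by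
      rw [Metric.tendstoUniformlyOn_iff]
      intro δ hδ
      obtain ⟨N, hN⟩ := hpack (δ/2) (by linarith)
      filter_upwards [Filter.eventually_ge_atTop N] with k hk
      intro w hw
      have h2 := (hN k hk w hw).2
      have heq : dist (ψ w) ((q k w)⁻¹) = ‖(q k w)⁻¹ - ψ w‖ := by
        rw [dist_comm, Complex.dist_eq]
      rw [heq]
      linarith
    apply TendstoLocallyUniformlyOn.differentiableOn
      ((hunif.mono Metric.ball_subset_closedBall).tendstoLocallyUniformlyOn)
    · obtain ⟨N, hN⟩ := hpack 1 one_pos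
      filter_upwards [Filter.eventually_ge_atTop N] with k hk
      apply DifferentiableOn.inv ((differentiable_slice z i (P k)).differentiableOn)
      exact fun w hw => (hN k hk w (Metric.ball_subset_closedBall hw)).1
    · exact Metric.isOpen_ball
  have hψ0 : ψ w₀ = 0 := by rw [hψdef]; simp only [hsl, hf₀, toC_infty, inv_zero]
  have hψan : AnalyticAt ℂ ψ w₀ := hψdiff.analyticAt (Metric.ball_mem_nhds w₀ hr)
  rcases hψan.eventually_eq_zero_or_eventually_ne_zero with h0 | h1
  · filter_upwards [h0, Metric.closedBall_mem_nhds w₀ hr] with w hw0 hwB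
    cases hfsl : f (sl w) with
    | infty => rfl
    | coe c =>
      exfalso
      have hc1 : 1 < ‖c‖ := hbig w hwB c hfsl
      have hwψ : ψ w = c⁻¹ := by rw [hψdef]; simp only [hfsl, toC_coe]
      rw [hwψ] at hw0
      rw [inv_eq_zero] at hw0
      rw [hw0, norm_zero] at hc1
      exact absurd hc1 (by norm_num)
  · exfalso
    rw [eventually_nhdsWithin_iff] at h1
    obtain ⟨t, ht, htq⟩ := Metric.eventually_nhds_iff.1 h1
    set ρ := min (t/2) (r/2) with hρdef
    have hρ0 : 0 < ρ := lt_min (by linarith) (by linarith)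
    have hρr : ρ < r := lt_of_le_of_lt (min_le_right _ _) (by linarith)
    have hρt : ρ < t := lt_of_le_of_lt (min_le_left _ _) (by linarith)
    have hsne : (Metric.sphere w₀ ρ).Nonempty := NormedSpace.sphere_nonempty.2 hρ0.le
    have hscomp : IsCompact (Metric.sphere w₀ ρ) := isCompact_sphere _ _
    have hsball : Metric.sphere w₀ ρ ⊆ Metric.ball w₀ r := fun w hw => by
      rw [Metric.mem_ball, show dist w w₀ = ρ from hw]
      exact hρr
    have hsψ : ∀ w ∈ Metric.sphere w₀ ρ, ψ w ≠ 0 := by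
      intro w hw
      have hdw : dist w w₀ = ρ := hw
      apply htq (show dist w w₀ < t by rw [hdw]; exact hρt)
      simp only [Set.mem_compl_iff, Set.mem_singleton_iff]
      intro hww
      rw [hww, dist_self] at hdw
      exact absurd hdw.symm (ne_of_gt hρ0)
    have hψcont : ContinuousOn ψ (Metric.sphere w₀ ρ) := hψdiff.continuousOn.mono hsball
    have habs : ContinuousOn (fun w => ‖ψ w‖) (Metric.sphere w₀ ρ) :=
      continuous_norm.comp_continuousOn hψcont
    obtain ⟨xm, hxm, hxmin'⟩ := hscomp.exists_isMinOn hsne habs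
    have hxmin : ∀ w ∈ Metric.sphere w₀ ρ, ‖ψ xm‖ ≤ ‖ψ w‖ :=
      fun w hw => hxmin' hw
    set m := ‖ψ xm‖ with hmdef
    have hm : 0 < m := norm_pos_iff.mpr (hsψ xm hxm)
    obtain ⟨N, hN⟩ := hpack (m/3) (by linarith)
    have hAll := hN N le_rfl
    have hsubB : Metric.sphere w₀ ρ ⊆ Metric.closedBall w₀ r := fun w hw => by
      rw [Metric.mem_closedBall, show dist w w₀ = ρ from hw]
      exact hρr.le
    have hqb : ∀ w ∈ Metric.sphere w₀ ρ, ‖q N w‖ ≤ (2*m/3)⁻¹ := by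
      intro w hw
      obtain ⟨hne, happ⟩ := hAll w (hsubB hw)
      have hψw : m ≤ ‖ψ w‖ := hxmin w hw
      have htriabs : ‖ψ w‖ ≤ ‖(q N w)⁻¹‖ + ‖ψ w - (q N w)⁻¹‖ := by
        have := norm_add_le ((q N w)⁻¹) (ψ w - (q N w)⁻¹)
        simpa using this
      have hsymm : ‖ψ w - (q N w)⁻¹‖ = ‖(q N w)⁻¹ - ψ w‖ :=
        norm_sub_rev _ _
      have h3 : 2*m/3 ≤ ‖(q N w)⁻¹‖ := by
        rw [hsymm] at htriabs
        linarith
      rw [norm_inv] at h3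
      have hq0 : 0 < ‖q N w‖ := norm_pos_iff.mpr hne
      have h5 : ‖q N w‖ * (‖q N w‖)⁻¹ = 1 := mul_inv_cancel₀ hq0.ne'
      have h6 : (2*m/3) * (2*m/3)⁻¹ = 1 := mul_inv_cancel₀ (by positivity)
      nlinarith [mul_pos hq0 (show (0:ℝ) < 2*m/3 by positivity),
        mul_le_mul_of_nonneg_left h3 hq0.le]
    have hmax : ‖q N w₀‖ ≤ (2*m/3)⁻¹ := by
      apply Complex.norm_le_of_forall_mem_frontier_norm_le Metric.isBounded_ball
        ((differentiable_slice z i (P N)).diffContOnCl)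
      · intro w hw
        rw [frontier_ball w₀ hρ0.ne'] at hw
        exact hqb w hw
      · exact subset_closure (Metric.mem_ball_self hρ0)
    obtain ⟨hne₀, happ₀⟩ := hAll w₀ (Metric.mem_closedBall_self hr.le)
    rw [hψ0, sub_zero] at happ₀
    have hq00 : 0 < ‖q N w₀‖ := norm_pos_iff.mpr hne₀
    have h8 : 2*m/3 ≤ ‖(q N w₀)⁻¹‖ := by
      rw [norm_inv]
      have := one_div_le_one_div_of_le hq00 hmax
      rwa [one_div, one_div, inv_inv] at this
    linarith

lemma slice_infty
    (hconv : ∀ ε > 0, ∃ K : ℕ, ∀ k ≥ K,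
      ∀ z ∈ Set.pi Set.univ fun i => closure (G i),
        chordal ((MvPolynomial.eval z (P k) : ℂ) : OnePoint ℂ) (f z) < ε)
    (hqc : ∀ z₀ ∈ (Set.pi Set.univ fun i => closure (G i)), ∀ ε > 0, ∃ U ∈ 𝓝 z₀,
      ∀ z ∈ U ∩ (Set.pi Set.univ fun i => closure (G i)), chordal (f z) (f z₀) < ε)
    (hcont : ContinuousOn f (Set.pi Set.univ fun i => closure (G i)))
    (z : I → ℂ) (hz : z ∈ Set.pi Set.univ G) (i : I) (hGoi : IsOpen (G i))
    (hGpi : IsPreconnected (G i)) (hfz : f z = ∞) :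
    ∀ w ∈ G i, f (Function.update z i w) = ∞ := by
  set E := {w : ℂ | w ∈ G i ∧ f (Function.update z i w) = ∞} with hE
  set F := {w : ℂ | w ∈ G i ∧ f (Function.update z i w) ≠ ∞} with hF
  have hEopen : IsOpen E := by
    rw [isOpen_iff_mem_nhds]
    rintro w₀ ⟨hw₀G, hw₀f⟩
    filter_upwards [slice_open_infty hconv hqc z hz i hGoi w₀ hw₀G hw₀f,
      hGoi.mem_nhds hw₀G] with w h1 h2
    exact ⟨h2, h1⟩
  have hFopen : IsOpen F := by
    rw [isOpen_iff_mem_nhds]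
    rintro w₀ ⟨hw₀G, hw₀f⟩
    have hslc := continuous_slice z i
    have h1 : Tendsto (fun w => Function.update z i w) (𝓝 w₀)
        (𝓝[Set.pi Set.univ fun j => closure (G j)] (Function.update z i w₀)) := by
      rw [tendsto_nhdsWithin_iff]
      refine ⟨hslc.tendsto w₀, ?_⟩
      filter_upwards [hGoi.mem_nhds hw₀G] with w hw using sliceK hz (subset_closure hw)
    have htends : Tendsto (fun w => f (Function.update z i w)) (𝓝 w₀)
        (𝓝 (f (Function.update z i w₀))) :=
      (hcont _ (sliceK hz (subset_closure hw₀G))).tendsto.comp h1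
    have hrange : f (Function.update z i w₀) ∈ Set.range ((↑) : ℂ → OnePoint ℂ) := by
      cases h : f (Function.update z i w₀) with
      | infty => exact absurd h hw₀f
      | coe c => exact ⟨c, rfl⟩
    have hev := htends (OnePoint.isOpen_range_coe.mem_nhds hrange)
    filter_upwards [hev, hGoi.mem_nhds hw₀G] with w h1 h2
    refine ⟨h2, ?_⟩
    have h1' : f (Function.update z i w) ∈ Set.range ((↑) : ℂ → OnePoint ℂ) := h1
    obtain ⟨c, hc⟩ := h1'
    rw [← hc]
    exact OnePoint.coe_ne_infty c
  intro w hwG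
  by_contra hcon
  have hEne : (G i ∩ E).Nonempty :=
    ⟨z i, hz i trivial, ⟨hz i trivial, by rwa [Function.update_eq_self]⟩⟩
  have hFne : (G i ∩ F).Nonempty := ⟨w, hwG, ⟨hwG, hcon⟩⟩
  have hcover : G i ⊆ E ∪ F := by
    intro w' hw'
    by_cases h : f (Function.update z i w') = ∞
    · exact Or.inl ⟨hw', h⟩
    · exact Or.inr ⟨hw', h⟩
  obtain ⟨x, hx⟩ := hGpi E F hEopen hFopen hcover hEne hFne
  exact hx.2.2.2 hx.2.1.2

lemma piGK : Set.pi Set.univ G ⊆ Set.pi Set.univ fun i => closure (G i) :=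
  fun x hx i _ => subset_closure (hx i trivial)

lemma global_infty
    (hconv : ∀ ε > 0, ∃ K : ℕ, ∀ k ≥ K,
      ∀ z ∈ Set.pi Set.univ fun i => closure (G i),
        chordal ((MvPolynomial.eval z (P k) : ℂ) : OnePoint ℂ) (f z) < ε)
    (hqc : ∀ z₀ ∈ (Set.pi Set.univ fun i => closure (G i)), ∀ ε > 0, ∃ U ∈ 𝓝 z₀,
      ∀ z ∈ U ∩ (Set.pi Set.univ fun i => closure (G i)), chordal (f z) (f z₀) < ε)
    (hcont : ContinuousOn f (Set.pi Set.univ fun i => closure (G i)))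
    (hGo : ∀ i, IsOpen (G i)) (hGp : ∀ i, IsPreconnected (G i))
    (z₀ : I → ℂ) (hz₀ : z₀ ∈ Set.pi Set.univ G) (hfz₀ : f z₀ = ∞) :
    ∀ z ∈ (Set.pi Set.univ fun i => closure (G i)), f z = ∞ := by
  classical
  have hstep1 : ∀ z₁ ∈ Set.pi Set.univ G, f z₁ = ∞ := by
    intro z₁ hz₁
    set zS : Finset I → (I → ℂ) := fun S j => if j ∈ S then z₁ j else z₀ j with hzSdef
    have hzSG : ∀ S, zS S ∈ Set.pi Set.univ G := by
      intro S j _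
      by_cases h : j ∈ S
      · simp only [hzSdef, h, if_true]
        exact hz₁ j trivial
      · simp only [hzSdef, h, if_false]
        exact hz₀ j trivial
    have hzSf : ∀ S : Finset I, f (zS S) = ∞ := by
      intro S
      induction S using Finset.induction_on with
      | empty =>
        have h0 : zS ∅ = z₀ := funext fun j => by simp [hzSdef]
        rw [h0]
        exact hfz₀
      | @insert a S ha ih =>
        have heq : zS (insert a S) = Function.update (zS S) a (z₁ a) := by
          funext j
          by_cases hj : j = a
          · subst hj
            simp [hzSdef, Function.update_self]
          · simp [hzSdef, Function.update_of_ne hj, Finset.mem_insert, hj]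
        rw [heq]
        exact slice_infty hconv hqc hcont (zS S) (hzSG S) a (hGo a) (hGp a) ih (z₁ a)
          (hz₁ a trivial)
    have htend : Tendsto zS atTop (𝓝 z₁) := by
      rw [tendsto_pi_nhds]
      intro j
      have hconstt : Tendsto (fun _ : Finset I => z₁ j) atTop (𝓝 (z₁ j)) := tendsto_const_nhds
      apply Filter.Tendsto.congr' _ hconstt
      rw [Filter.EventuallyEq, Filter.eventually_atTop]
      refine ⟨{j}, fun S hS => ?_⟩
      have hjS : j ∈ S := hS (Finset.mem_singleton_self j)
      simp [hzSdef, hjS]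
    have htendW : Tendsto zS atTop (𝓝[Set.pi Set.univ fun i => closure (G i)] z₁) := by
      rw [tendsto_nhdsWithin_iff]
      exact ⟨htend, Filter.Eventually.of_forall fun S => piGK (hzSG S)⟩
    have hlim := (hcont z₁ (piGK hz₁)).tendsto.comp htendW
    have hconst : (f ∘ zS) = fun _ => (∞ : OnePoint ℂ) := funext fun S => hzSf S
    rw [hconst] at hlim
    have hct : Tendsto (fun _ : Finset I => (∞ : OnePoint ℂ)) atTop (𝓝 ∞) := tendsto_const_nhds
    exact tendsto_nhds_unique hlim hct
  intro z hzK
  have hcl : z ∈ closure (Set.pi Set.univ G) := by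
    rw [closure_pi_set]
    exact hzK
  have hcw : ContinuousWithinAt f (Set.pi Set.univ G) z := (hcont z hzK).mono piGK
  have h1 : f z ∈ closure (f '' Set.pi Set.univ G) := hcw.mem_closure_image hcl
  have h2 : f '' Set.pi Set.univ G ⊆ {∞} := by
    rintro _ ⟨x, hx, rfl⟩
    exact hstep1 x hx
  have h3 := (closure_mono h2) h1
  rw [closure_singleton] at h3
  exact h3

lemma diff_slice_fin
    (hconv : ∀ ε > 0, ∃ K : ℕ, ∀ k ≥ K,
      ∀ z ∈ Set.pi Set.univ fun i => closure (G i),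
        chordal ((MvPolynomial.eval z (P k) : ℂ) : OnePoint ℂ) (f z) < ε)
    (hcont : ContinuousOn f (Set.pi Set.univ fun i => closure (G i)))
    (hGo : ∀ i, IsOpen (G i))
    (hfin : ∀ z' ∈ Set.pi Set.univ G, f z' ≠ ∞)
    (z : I → ℂ) (hz : z ∈ Set.pi Set.univ G) (i : I) :
    DifferentiableAt ℂ (fun w => toC (f (Function.update z i w))) (z i) := by
  obtain ⟨r, hr, hball⟩ := Metric.nhds_basis_closedBall.mem_iff.1
    ((hGo i).mem_nhds (hz i trivial))
  set sl : ℂ → (I → ℂ) := fun w => Function.update z i w with hsl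
  have hslc : Continuous sl := continuous_slice z i
  have hBG : ∀ w ∈ Metric.closedBall (z i) r, sl w ∈ Set.pi Set.univ G :=
    fun w hw => sliceG hz (hball hw)
  have hBK : ∀ w ∈ Metric.closedBall (z i) r,
      sl w ∈ (Set.pi Set.univ fun j => closure (G j)) := fun w hw => piGK (hBG w hw)
  set φ : ℂ → ℂ := fun w => toC (f (sl w)) with hφ
  have hφcont : ContinuousOn φ (Metric.closedBall (z i) r) := by
    intro w hw
    have h1 : Tendsto sl (𝓝[Metric.closedBall (z i) r] w)
        (𝓝[Set.pi Set.univ fun j => closure (G j)] (sl w)) := by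
      rw [tendsto_nhdsWithin_iff]
      refine ⟨(hslc.tendsto w).mono_left nhdsWithin_le_nhds, ?_⟩
      filter_upwards [eventually_mem_nhdsWithin] with w' hw' using hBK w' hw'
    have h2 : Tendsto (fun w' => f (sl w')) (𝓝[Metric.closedBall (z i) r] w)
        (𝓝 (f (sl w))) := (hcont _ (hBK w hw)).tendsto.comp h1
    have hfe : f (sl w) = ↑(φ w) := (coe_toC (hfin _ (hBG w hw))).symm
    rw [hfe] at h2
    exact tendsto_toC h2
  obtain ⟨M, hM⟩ := (isCompact_closedBall (z i) r).exists_bound_of_continuousOn hφcont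
  set M' := max M 0 with hM'def
  have hM'0 : 0 ≤ M' := le_max_right _ _
  have hM' : ∀ w ∈ Metric.closedBall (z i) r, ‖φ w‖ ≤ M' := by
    intro w hw
    exact le_trans (hM w hw) (le_max_left _ _)
  set q : ℕ → ℂ → ℂ := fun k w => MvPolynomial.eval (sl w) (P k) with hqdef
  have hunif : TendstoUniformlyOn q φ atTop (Metric.closedBall (z i) r) := by
    rw [Metric.tendstoUniformlyOn_iff]
    intro δ hδ
    set ε := min (δ / (2 * (1 + M' ^ 2) + 1)) (1 / (2 * Real.sqrt (1 + M' ^ 2))) with hεdef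
    have hε0 : 0 < ε := lt_min (by positivity) (by positivity)
    obtain ⟨N, hN⟩ := hconv ε hε0
    filter_upwards [Filter.eventually_ge_atTop N] with k hk
    intro w hw
    have hqf : chordal ↑(q k w) (f (sl w)) < ε := hN k hk (sl w) (hBK w hw)
    have hfe : f (sl w) = ↑(φ w) := (coe_toC (hfin _ (hBG w hw))).symm
    rw [hfe] at hqf
    have hest := key_est (hM' w hw) hqf (min_le_right _ _)
    have heps : ε ≤ δ / (2 * (1 + M' ^ 2) + 1) := min_le_left _ _
    have hb : 2 * ε * (1 + M' ^ 2) < δ := by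
      have h1 : (0:ℝ) < 2 * (1 + M' ^ 2) + 1 := by positivity
      rw [le_div_iff₀ h1] at heps
      nlinarith
    have heq : dist (φ w) (q k w) = ‖q k w - φ w‖ := by
      rw [dist_comm, Complex.dist_eq]
    rw [heq]
    linarith
  have hdiff : DifferentiableOn ℂ φ (Metric.ball (z i) r) := by
    apply TendstoLocallyUniformlyOn.differentiableOn
      ((hunif.mono Metric.ball_subset_closedBall).tendstoLocallyUniformlyOn)
    · filter_upwards with k
      exact (differentiable_slice z i (P k)).differentiableOn
    · exact Metric.isOpen_ball
  exact hdiff.differentiableAt (Metric.ball_mem_nhds _ hr)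

end Main2

/-- If `Gᵢ ⊂ ℂ` are Jordan domains and `f : ∏ᵢ closure Gᵢ → ℂ ∪ {∞}` is a uniform limit, with
respect to the chordal metric, of polynomials on `∏ᵢ closure Gᵢ`, then either `f ≡ ∞`, or `f`
is continuous on `∏ᵢ closure Gᵢ`, finite on `∏ᵢ Gᵢ`, and separately holomorphic on `∏ᵢ Gᵢ`. -/
theorem stmt17 {I : Type*} [DecidableEq I] (G : I → Set ℂ)
    (hG : ∀ i, IsJordanDomain (G i))
    (P : ℕ → MvPolynomial I ℂ) (f : (I → ℂ) → OnePoint ℂ)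
    (hconv : ∀ ε > 0, ∃ K : ℕ, ∀ k ≥ K,
      ∀ z ∈ Set.pi Set.univ fun i => closure (G i),
        chordal ((MvPolynomial.eval z (P k) : ℂ) : OnePoint ℂ) (f z) < ε) :
    (∀ z ∈ Set.pi Set.univ fun i => closure (G i), f z = OnePoint.infty) ∨
    (ContinuousOn f (Set.pi Set.univ fun i => closure (G i)) ∧
      ∃ g : (I → ℂ) → ℂ,
        (∀ z ∈ Set.pi Set.univ G, f z = (g z : OnePoint ℂ)) ∧
        ∀ z ∈ Set.pi Set.univ G, ∀ i : I,
          DifferentiableAt ℂ (fun w => g (Function.update z i w)) (z i)) := by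
  classical
  have hGo : ∀ i, IsOpen (G i) := by
    intro i
    obtain ⟨C, ⟨e⟩, hb, z0, hz0, hGi⟩ := hG i
    have hsph : CompactSpace ↥(Metric.sphere (0:ℂ) 1) :=
      isCompact_iff_compactSpace.1 (isCompact_sphere 0 1)
    have hCc : IsCompact C := isCompact_iff_compactSpace.2 e.compactSpace
    have hopen : IsOpen Cᶜ := hCc.isClosed.isOpen_compl
    rw [hGi]
    exact hopen.connectedComponentIn
  have hGp : ∀ i, IsPreconnected (G i) := by
    intro i
    obtain ⟨C, _, hb, z0, hz0, hGi⟩ := hG i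
    rw [hGi]
    exact isPreconnected_connectedComponentIn
  have hqc := qc_of_hconv hconv
  have hcont := contOn_of_qc hqc
  by_cases hex : ∃ z₀ ∈ Set.pi Set.univ G, f z₀ = OnePoint.infty
  · left
    obtain ⟨z₀, hz₀, hfz₀⟩ := hex
    exact global_infty hconv hqc hcont hGo hGp z₀ hz₀ hfz₀
  · right
    push_neg at hex
    refine ⟨hcont, fun z => toC (f z), fun z hz => (coe_toC (hex z hz)).symm, ?_⟩
    intro z hz i
    exact diff_slice_fin hconv hcont hGo hex z hz i
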